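/- Let T be a weighted tree with ρ > 0 under the postal model. For any two distinct vertices x, y of T, b_time(x, T) ≥ d(x,y)·ρ + w̃(x,y) + b_time(y, B(y,x)), where d(x,y) and w̃(x,y) are the hop-count and total weight of the x-to-y path and B(y,x) is T minus the component of T − y containing x. -/

import Mathlib

/-!
Common definitions for the postal-model broadcasting problem on weighted trees.
-/

open SimpleGraph

namespace Postal

attribute [local instance] Classical.propDecidable

variable {V : Type*} [Fintype V] [DecidableEq V] (G : SimpleGraph V)

/-- The unique path (as a walk) between two vertices of a tree. -/
noncomputable def tPath (hG : G.IsTree) (u v : V) : G.Walk u v :=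
  (hG.existsUnique_path u v).exists.choose

/-- `z` lies in the open branch `O(x,y)`: the component of `T - x` containing `y`. -/
def inO (x y z : V) : Prop := ∃ p : G.Walk y z, x ∉ p.support

/-- The open branch `O(x,y)`. -/
def Obr (x y : V) : Set V := {z | inO G x y z}

/-- The closed branch `B(x,y) = T - O(x,y)` (it contains `x`). -/
def Bbr (x y : V) : Set V := {z | ¬ inO G x y z}

/-- The parent of `z` with respect to the root `u`: the penultimate vertex on the
unique `u`-to-`z` path. -/
noncomputable def parent (hG : G.IsTree) (u z : V) : V :=
  (tPath G hG u z).getVert ((tPath G hG u z).length - 1)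

/-- The receive time of `z` under schedule `σ` when `u` originates the message:
along the unique `u`-to-`z` path, each vertex is contacted in its slot `σ`,
contributing `σ·ρ` connection time plus the edge weight. -/
noncomputable def recvTime (hG : G.IsTree) (w : V → V → ℝ) (ρ : ℝ) (σ : V → ℕ) (u z : V) : ℝ :=
  ((tPath G hG u z).darts.map (fun d => (σ d.toProd.2 : ℝ) * ρ + w d.toProd.1 d.toProd.2)).sum

/-- A schedule `σ` is valid for source `u` broadcasting over the vertex set `S`:
every non-source vertex gets a slot `≥ 1`, and distinct vertices with the same
parent get distinct slots (a sender contacts its neighbors sequentially). -/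
def Valid (hG : G.IsTree) (σ : V → ℕ) (u : V) (S : Set V) : Prop :=
  (∀ z ∈ S, z ≠ u → 1 ≤ σ z) ∧
  (∀ z₁ ∈ S, ∀ z₂ ∈ S, z₁ ≠ u → z₂ ≠ u → z₁ ≠ z₂ →
    parent G hG u z₁ = parent G hG u z₂ → σ z₁ ≠ σ z₂)

/-- The minimum broadcast time for `u` to broadcast a message over the subtree
induced by `S` under the postal model with latency `ρ`. -/
noncomputable def bTime (hG : G.IsTree) (w : V → V → ℝ) (ρ : ℝ) (u : V) (S : Set V) : ℝ :=
  sInf {m | ∃ σ, Valid G hG σ u S ∧ m = sSup ((recvTime G hG w ρ σ u) '' S)}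

/-- Broadcast time over the whole tree. -/
noncomputable def bTimeT (hG : G.IsTree) (w : V → V → ℝ) (ρ : ℝ) (u : V) : ℝ :=
  bTime G hG w ρ u Set.univ

/-- The set of broadcast centers. -/
def BCtr (hG : G.IsTree) (w : V → V → ℝ) (ρ : ℝ) : Set V :=
  {u | ∀ v, bTimeT G hG w ρ u ≤ bTimeT G hG w ρ v}

/-- A prime broadcast center. -/
def IsPrime (hG : G.IsTree) (w : V → V → ℝ) (ρ : ℝ) (κ : V) : Prop :=
  κ ∈ BCtr G hG w ρ ∧
  ∀ u, G.Adj κ u → bTime G hG w ρ u (Bbr G u κ) ≤ bTime G hG w ρ κ (Bbr G κ u)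

/-- Hop distance: number of edges on the unique path. -/
noncomputable def hop (hG : G.IsTree) (x y : V) : ℕ := (tPath G hG x y).length

/-- Total weight of the unique `x`-to-`y` path. -/
noncomputable def pw (hG : G.IsTree) (w : V → V → ℝ) (x y : V) : ℝ :=
  ((tPath G hG x y).darts.map (fun d => w d.toProd.1 d.toProd.2)).sum

/-- Symmetric weight function. -/
def Wsymm (w : V → V → ℝ) : Prop := ∀ a b, w a b = w b a

/-- Positive weights on edges. -/
def Wpos (w : V → V → ℝ) : Prop := ∀ a b, G.Adj a b → 0 < w a b

/-- A scenario: a symmetric weight assignment within the uncertainty intervals. -/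
def Scenario (lo hi : V → V → ℝ) (w : V → V → ℝ) : Prop :=
  (∀ a b, w a b = w b a) ∧ ∀ a b, G.Adj a b → lo a b ≤ w a b ∧ w a b ≤ hi a b

/-- The maximum regret of `x`. -/
noncomputable def maxRegret (hG : G.IsTree) (lo hi : V → V → ℝ) (ρ : ℝ) (x : V) : ℝ :=
  sSup {r | ∃ w y, Scenario G lo hi w ∧ r = bTimeT G hG w ρ x - bTimeT G hG w ρ y}

/-- `w` is a worst-case scenario of the tree with respect to `x`. -/
def WorstCase (hG : G.IsTree) (lo hi : V → V → ℝ) (ρ : ℝ) (x : V) (w : V → V → ℝ) : Prop :=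
  Scenario G lo hi w ∧
  ∃ y, bTimeT G hG w ρ x - bTimeT G hG w ρ y = maxRegret G hG lo hi ρ x

/-- An edge `(a,b)` lies on the unique `x`-to-`y` path. -/
def onPath (hG : G.IsTree) (x y a b : V) : Prop :=
  a ∈ (tPath G hG x y).support ∧ b ∈ (tPath G hG x y).support

/-- The base scenario `α_{x,y}`: weight `hi` on the `x`-to-`y` path and on edges of
`B(y,x)`, weight `lo` elsewhere. -/
noncomputable def baseScenario (hG : G.IsTree) (lo hi : V → V → ℝ) (x y : V) : V → V → ℝ :=
  fun a b =>
    if onPath G hG x y a b ∨ (a ∈ Bbr G y x ∧ b ∈ Bbr G y x) then hi a b else lo a b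

/-- The value `w(y,v) + b_time(v, B(v,y))` of a neighbor `v` of `y`. -/
noncomputable def nval (hG : G.IsTree) (w : V → V → ℝ) (ρ : ℝ) (y v : V) : ℝ :=
  w y v + bTime G hG w ρ v (Bbr G v y)

/-- Scenario `β^j_{x,y}`: agrees with `α_{x,y}`, except that every edge in
`{(y,u_k)} ∪ E(B(u_k,y))` for `k > j` (with `u` the 1-based sorted enumeration
of the neighbors of `y` in `B(y,x)`) gets weight `lo`. -/
noncomputable def betaScenario (hG : G.IsTree) (lo hi : V → V → ℝ) (x y : V) {h : ℕ}
    (u : Fin h → V) (j : ℕ) : V → V → ℝ :=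
  fun a b =>
    if ∃ k : Fin h, j < (k : ℕ) + 1 ∧
        ((a = y ∧ b = u k) ∨ (b = y ∧ a = u k) ∨
          (a ∈ Bbr G (u k) y ∧ b ∈ Bbr G (u k) y)) then
      lo a b
    else baseScenario G hG lo hi x y a b

/-- Scenario `γ^j_{x,y}`: agrees with `α_{x,y}` on the edges in
`⋃_{1 ≤ k ≤ j} ({(y,u_k)} ∪ E(B(u_k,y)))` and with the scenario `s` elsewhere. -/
noncomputable def gammaScenario (hG : G.IsTree) (lo hi : V → V → ℝ) (s : V → V → ℝ)
    (x y : V) {h : ℕ} (u : Fin h → V) (j : ℕ) : V → V → ℝ :=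
  fun a b =>
    if ∃ k : Fin h, (k : ℕ) + 1 ≤ j ∧
        ((a = y ∧ b = u k) ∨ (b = y ∧ a = u k) ∨
          (a ∈ Bbr G (u k) y ∧ b ∈ Bbr G (u k) y)) then
      baseScenario G hG lo hi x y a b
    else s a b

/-- The set of neighbors of `y` inside the branch `B(y,x)`. -/
def nbrIn (x y : V) : Set V := {v | G.Adj y v ∧ v ∈ Bbr G y x}


lemma tPath_isPath (hG : G.IsTree) (u v : V) : (tPath G hG u v).IsPath :=
  (hG.existsUnique_path u v).exists.choose_spec

lemma tPath_eq (hG : G.IsTree) {u v : V} {p : G.Walk u v} (hp : p.IsPath) :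
    tPath G hG u v = p :=
  (hG.existsUnique_path u v).unique (tPath_isPath G hG u v) hp

lemma tPath_nil (hG : G.IsTree) (u : V) : tPath G hG u u = SimpleGraph.Walk.nil :=
  tPath_eq G hG SimpleGraph.Walk.IsPath.nil

lemma mem_support_of_mem_Bbr (hG : G.IsTree) {x y z : V} (hz : z ∈ Bbr G y x) :
    y ∈ (tPath G hG x z).support := by
  by_contra h
  exact hz ⟨tPath G hG x z, h⟩

lemma tPath_split (hG : G.IsTree) {x y z : V} (hy : y ∈ (tPath G hG x z).support) :
    tPath G hG x z = (tPath G hG x y).append (tPath G hG y z) := by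
  have h1 : tPath G hG x y = (tPath G hG x z).takeUntil y hy :=
    tPath_eq G hG ((tPath_isPath G hG x z).takeUntil hy)
  have h2 : tPath G hG y z = (tPath G hG x z).dropUntil y hy :=
    tPath_eq G hG ((tPath_isPath G hG x z).dropUntil hy)
  rw [h1, h2, SimpleGraph.Walk.take_spec]

lemma recvTime_split (hG : G.IsTree) (w : V → V → ℝ) (ρ : ℝ) (σ : V → ℕ)
    {x y z : V} (hy : y ∈ (tPath G hG x z).support) :
    recvTime G hG w ρ σ x z = recvTime G hG w ρ σ x y + recvTime G hG w ρ σ y z := by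
  unfold recvTime
  rw [tPath_split G hG hy, SimpleGraph.Walk.darts_append, List.map_append, List.sum_append]

lemma list_sum_const_add {α : Type*} (L : List α) (c : ℝ) (f : α → ℝ) :
    (L.map (fun d => c + f d)).sum = L.length * c + (L.map f).sum := by
  induction L with
  | nil => simp
  | cons a t ih => simp [ih]; ring

lemma recvTime_lb (hG : G.IsTree) (w : V → V → ℝ) (ρ : ℝ) (hρ : 0 < ρ) (σ : V → ℕ)
    (x y : V) (hσ : ∀ z, z ≠ x → 1 ≤ σ z) :
    (hop G hG x y : ℝ) * ρ + pw G hG w x y ≤ recvTime G hG w ρ σ x y := by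
  have hmem : ∀ d ∈ (tPath G hG x y).darts, d.toProd.2 ≠ x := by
    intro d hd hdx
    have h1 : d.toProd.2 ∈ (tPath G hG x y).darts.map (·.snd) :=
      List.mem_map_of_mem hd
    rw [SimpleGraph.Walk.map_snd_darts] at h1
    have hnd := (tPath_isPath G hG x y).support_nodup
    rw [SimpleGraph.Walk.support_eq_cons] at hnd
    exact (List.nodup_cons.mp hnd).1 (hdx ▸ h1)
  unfold recvTime hop pw
  rw [← SimpleGraph.Walk.length_darts, ← list_sum_const_add]
  apply List.sum_le_sum
  intro d hd
  have h1 : (1 : ℝ) ≤ (σ d.toProd.2 : ℝ) := by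
    exact_mod_cast hσ _ (hmem d hd)
  nlinarith

lemma parent_eq (hG : G.IsTree) {x y z : V} (hy : y ∈ (tPath G hG x z).support)
    (hzy : z ≠ y) : parent G hG x z = parent G hG y z := by
  unfold parent
  have hq : 1 ≤ (tPath G hG y z).length := by
    rcases Nat.eq_zero_or_pos (tPath G hG y z).length with h | h
    · exact absurd (SimpleGraph.Walk.eq_of_length_eq_zero h).symm hzy
    · exact h
  rw [tPath_split G hG hy, SimpleGraph.Walk.getVert_append, SimpleGraph.Walk.length_append,
    if_neg (by omega)]
  congr 1
  omega


/-- For distinct vertices `x, y`,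
`b_time(x,T) ≥ d(x,y)·ρ + w̃(x,y) + b_time(y, B(y,x))`. -/
theorem stmt5 {V : Type*} [Fintype V] [DecidableEq V] (G : SimpleGraph V) (hG : G.IsTree)
    (w : V → V → ℝ) (hsym : Wsymm w) (hpos : Wpos G w) (ρ : ℝ) (hρ : 0 < ρ)
    (x y : V) (hxy : x ≠ y) :
    (hop G hG x y : ℝ) * ρ + pw G hG w x y + bTime G hG w ρ y (Bbr G y x)
      ≤ bTimeT G hG w ρ x := by
  have hxB : x ∉ Bbr G y x := fun h => h ⟨SimpleGraph.Walk.nil, by simp [Ne.symm hxy]⟩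
  have hyB : y ∈ Bbr G y x := fun ⟨p, hp⟩ => hp p.end_mem_support
  apply le_csInf
  · -- nonempty: an injective schedule is valid
    refine ⟨_, fun z => ((Fintype.equivFin V) z : ℕ) + 1, ⟨fun z _ _ => Nat.le_add_left 1 _,
      fun z₁ _ z₂ _ _ _ hne _ h => hne ((Fintype.equivFin V).injective ?_)⟩, rfl⟩
    have h' : ((Fintype.equivFin V) z₁ : ℕ) + 1 = ((Fintype.equivFin V) z₂ : ℕ) + 1 := h
    exact Fin.ext (by omega)
  · rintro m ⟨σ, hσ, rfl⟩
    have hσ1 : ∀ z, z ≠ x → 1 ≤ σ z := fun z hz => hσ.1 z (Set.mem_univ z) hz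
    have hbdd : BddAbove (recvTime G hG w ρ σ x '' Set.univ) :=
      Set.Finite.bddAbove (Set.toFinite _)
    have hub : ∀ z, recvTime G hG w ρ σ x z ≤ sSup (recvTime G hG w ρ σ x '' Set.univ) :=
      fun z => le_csSup hbdd ⟨z, Set.mem_univ z, rfl⟩
    have hlb := recvTime_lb G hG w ρ hρ σ x y hσ1
    -- σ is valid for y over Bbr
    have hval : Valid G hG σ y (Bbr G y x) := by
      constructor
      · intro z hz hzy
        exact hσ1 z (fun h => hxB (h ▸ hz))
      · intro z₁ hz₁ z₂ hz₂ h1 h2 hne hp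
        have e1 := parent_eq G hG (mem_support_of_mem_Bbr G hG hz₁) h1
        have e2 := parent_eq G hG (mem_support_of_mem_Bbr G hG hz₂) h2
        exact hσ.2 z₁ (Set.mem_univ _) z₂ (Set.mem_univ _)
          (fun h => hxB (h ▸ hz₁)) (fun h => hxB (h ▸ hz₂)) hne (by rw [e1, e2, hp])
    have hB : bTime G hG w ρ y (Bbr G y x)
        ≤ sSup (recvTime G hG w ρ σ y '' Bbr G y x) := by
      apply csInf_le
      · refine ⟨0, ?_⟩
        rintro t ⟨σ', hσ', rfl⟩
        have h0 : recvTime G hG w ρ σ' y y = 0 := by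
          unfold recvTime; rw [tPath_nil]; simp
        have h1 : recvTime G hG w ρ σ' y y
            ≤ sSup (recvTime G hG w ρ σ' y '' Bbr G y x) :=
          le_csSup (Set.Finite.bddAbove (Set.toFinite _)) ⟨y, hyB, rfl⟩
        linarith
      · exact ⟨σ, hval, rfl⟩
    have hsup : sSup (recvTime G hG w ρ σ y '' Bbr G y x)
        ≤ sSup (recvTime G hG w ρ σ x '' Set.univ)
          - ((hop G hG x y : ℝ) * ρ + pw G hG w x y) := by
      refine csSup_le ⟨_, Set.mem_image_of_mem _ hyB⟩ ?_
      rintro t ⟨z, hz, rfl⟩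
      have hs := recvTime_split G hG w ρ σ (mem_support_of_mem_Bbr G hG hz)
      have := hub z
      linarith
    linarith


end Postal
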